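/- Fix an integer a ≥ 2 and let p/q ∈ (0, a) be a rational number whose canonical continued fraction expansion is [a_0; a_1, …, a_n] with every partial quotient a_i ≤ a − 1. Then the locking zone Z_a(p/q) is exactly the closed interval whose two endpoints are ν^σ = [a_0; a_1, …, a_n, a] and ν^{−σ} = [a_0; a_1, …, a_n − 1, 1, a], where σ = + if n is even and σ = − if n is odd (that is, [a_0; a_1, …, a_n, a] is the right endpoint ν^+(p/q) precisely when n is even, and the left endpoint ν^−(p/q) when n is odd). In particular r_a(x) = p/q for every x in this closed interval. -/

import Mathlib

/-- One step of the Gauss continued-fraction algorithm (returns `0` upon termination). -/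
noncomputable def cfStep (y : ℝ) : ℝ := if Int.fract y = 0 then 0 else (Int.fract y)⁻¹

/-- Iterates of the Gauss map used to compute the canonical continued fraction of `x`. -/
noncomputable def cfIter (x : ℝ) : ℕ → ℝ
  | 0 => x
  | n + 1 => cfStep (cfIter x n)

/-- The `n`-th partial quotient of the canonical continued fraction expansion of `x`
(by convention it is `0` past the end of a finite expansion). -/
noncomputable def pquot (x : ℝ) (n : ℕ) : ℤ := ⌊cfIter x n⌋

/-- Value of a finite continued fraction `[a₀; a₁, …, aₙ]`. -/
noncomputable def cfEval : List ℤ → ℝ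
  | [] => 0
  | [a] => (a : ℝ)
  | a :: l => (a : ℝ) + (cfEval l)⁻¹

/-- The canonical continued fraction expansion of `x` is exactly `[A 0; A 1, …, A n]`. -/
def IsCanonCF (x : ℝ) (A : ℕ → ℤ) (n : ℕ) : Prop :=
  (∀ i ≤ n, pquot x i = A i) ∧ Int.fract (cfIter x n) = 0 ∧ ∀ i < n, Int.fract (cfIter x i) ≠ 0

/-- The `n`-th convergent `pₙ/qₙ = [x₀; x₁, …, xₙ]` of `x`. -/
noncomputable def cfConv (x : ℝ) (n : ℕ) : ℝ := cfEval ((List.range (n + 1)).map (pquot x))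

open scoped Classical in
/-- The resolution map `r_a`: truncate the canonical continued fraction expansion just
before the first partial quotient `xᵢ` (`i ≥ 1`) with `xᵢ ≥ a`; identity otherwise. -/
noncomputable def ra (a : ℕ) (x : ℝ) : ℝ :=
  if h : ∃ i, 1 ≤ i ∧ (a : ℤ) ≤ pquot x i then
    cfEval ((List.range (Nat.find h)).map (pquot x))
  else x

/-- The locking zone `Z_a(r) = {x ∈ [0, a) : r_a(x) = r}`. -/
noncomputable def lockZone (a : ℕ) (r : ℝ) : Set ℝ :=
  {x | x ∈ Set.Ico (0 : ℝ) (a : ℝ) ∧ ra a x = r}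

/-- Right boundary `ν⁺` of a locking zone. -/
noncomputable def nuPlus (a : ℕ) (r : ℝ) : ℝ := sSup (lockZone a r)

/-- Left boundary `ν⁻` of a locking zone. -/
noncomputable def nuMinus (a : ℕ) (r : ℝ) : ℝ := sInf (lockZone a r)

/-! ### Auxiliary lemmas -/

noncomputable def cfT : List ℤ → ℝ → ℝ
  | [], t => t
  | b :: l, t => (b : ℝ) + (cfT l t)⁻¹

@[simp] lemma cfT_nil (t : ℝ) : cfT [] t = t := rfl

@[simp] lemma cfT_cons (b : ℤ) (l : List ℤ) (t : ℝ) :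
    cfT (b :: l) t = (b : ℝ) + (cfT l t)⁻¹ := rfl

@[simp] lemma cfEval_nil : cfEval [] = 0 := rfl

@[simp] lemma cfEval_singleton (b : ℤ) : cfEval [b] = (b : ℝ) := rfl

lemma cfEval_cons (b : ℤ) (l : List ℤ) (hl : l ≠ []) :
    cfEval (b :: l) = (b : ℝ) + (cfEval l)⁻¹ := by
  cases l with
  | nil => exact absurd rfl hl
  | cons c m => rfl

lemma cfT_gt_one {M : List ℤ} {t : ℝ} (hM : ∀ c ∈ M, (1:ℤ) ≤ c) (ht : 1 < t) :
    1 < cfT M t := by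
  induction M with
  | nil => simpa using ht
  | cons b l ih =>
    have h1 : 1 < cfT l t := ih (fun c hc => hM c (List.mem_cons_of_mem _ hc))
    have hb : (1:ℝ) ≤ (b:ℝ) := by exact_mod_cast hM b List.mem_cons_self
    have h2 : (0:ℝ) < (cfT l t)⁻¹ := inv_pos.2 (by linarith)
    simp only [cfT_cons]; linarith

lemma cfEval_ge_one {M : List ℤ} (hM : ∀ c ∈ M, (1:ℤ) ≤ c) (hne : M ≠ []) :
    1 ≤ cfEval M := by
  induction M with
  | nil => exact absurd rfl hne
  | cons b l ih =>
    have hb : (1:ℝ) ≤ (b:ℝ) := by exact_mod_cast hM b List.mem_cons_self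
    cases l with
    | nil => simpa using hb
    | cons c m =>
      have h1 : 1 ≤ cfEval (c :: m) := ih (fun d hd => hM d (List.mem_cons_of_mem _ hd)) (by simp)
      have h2 : (0:ℝ) < (cfEval (c :: m))⁻¹ := inv_pos.2 (by linarith)
      rw [cfEval_cons _ _ (by simp)]; linarith

lemma cfEval_gt_one {M : List ℤ} (hM : ∀ c ∈ M, (1:ℤ) ≤ c) (hne : M ≠ [])
    (hlast : ∀ c, M.getLast? = some c → 2 ≤ c) : 1 < cfEval M := by
  cases M with
  | nil => exact absurd rfl hne
  | cons b l =>
    cases l with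
    | nil =>
      have : (2:ℤ) ≤ b := hlast b (by simp)
      have : (2:ℝ) ≤ (b:ℝ) := by exact_mod_cast this
      simpa using by linarith
    | cons c m =>
      have hb : (1:ℝ) ≤ (b:ℝ) := by exact_mod_cast hM b List.mem_cons_self
      have h1 : 1 ≤ cfEval (c :: m) := cfEval_ge_one
        (fun d hd => hM d (List.mem_cons_of_mem _ hd)) (by simp)
      have h2 : (0:ℝ) < (cfEval (c :: m))⁻¹ := inv_pos.2 (by linarith)
      rw [cfEval_cons _ _ (by simp)]; linarith

lemma cfT_append (P Q : List ℤ) (t : ℝ) : cfT (P ++ Q) t = cfT P (cfT Q t) := by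
  induction P with
  | nil => rfl
  | cons b l ih => simp [cfT_cons, ih]

lemma cfEval_append (P Q : List ℤ) (hQ : Q ≠ []) :
    cfEval (P ++ Q) = cfT P (cfEval Q) := by
  induction P with
  | nil => rfl
  | cons b l ih =>
    have hne : l ++ Q ≠ [] := by simp [hQ]
    rw [List.cons_append, cfEval_cons _ _ hne, ih, cfT_cons]

lemma cfEval_append_singleton (P : List ℤ) (c : ℤ) :
    cfEval (P ++ [c]) = cfT P (c : ℝ) := by
  rw [cfEval_append P [c] (by simp)]; simp

lemma cfEval_one_trick (P : List ℤ) (b : ℤ) :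
    cfEval (P ++ [b, 1]) = cfEval (P ++ [b + 1]) := by
  rw [cfEval_append P [b, 1] (by simp), cfEval_append_singleton]
  have : cfEval [b, 1] = ((b + 1 : ℤ) : ℝ) := by
    rw [cfEval_cons _ _ (by simp)]; push_cast; simp
  rw [this]

/-- Strict monotonicity of `t ↦ cfT M t` (direction depends on the parity of `M.length`). -/
lemma cfT_strictMono {M : List ℤ} (hM : ∀ c ∈ M, (1:ℤ) ≤ c) {s t : ℝ}
    (hs : 1 < s) (hst : s < t) :
    if Even M.length then cfT M s < cfT M t else cfT M t < cfT M s := by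
  induction M with
  | nil => simpa using hst
  | cons b l ih =>
    have hl : ∀ c ∈ l, (1:ℤ) ≤ c := fun c hc => hM c (List.mem_cons_of_mem _ hc)
    have h1s : 1 < cfT l s := cfT_gt_one hl hs
    have h1t : 1 < cfT l t := cfT_gt_one hl (lt_trans hs hst)
    have ihl := ih hl
    by_cases h : Even l.length
    · have hlt : cfT l s < cfT l t := by rwa [if_pos h] at ihl
      have hinv : (cfT l t)⁻¹ < (cfT l s)⁻¹ := by
        apply inv_strictAnti₀ <;> linarith
      have hodd : ¬ Even (b :: l).length := by
        rw [List.length_cons, Nat.even_add_one]; exact not_not_intro h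
      rw [if_neg hodd, cfT_cons, cfT_cons]; linarith
    · have hlt : cfT l t < cfT l s := by rwa [if_neg h] at ihl
      have hinv : (cfT l s)⁻¹ < (cfT l t)⁻¹ := by
        apply inv_strictAnti₀ <;> linarith
      have heven : Even (b :: l).length := by
        rw [List.length_cons, Nat.even_add_one]; exact h
      rw [if_pos heven, cfT_cons, cfT_cons]; linarith

/-- Comparison of `cfT M t` with `cfEval M` (direction depends on parity). -/
lemma cfT_vs_cfEval {M : List ℤ} (hM : ∀ c ∈ M, (1:ℤ) ≤ c) (hne : M ≠ []) {t : ℝ}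
    (ht : 1 < t) :
    if Even M.length then cfT M t < cfEval M else cfEval M < cfT M t := by
  induction M with
  | nil => exact absurd rfl hne
  | cons b l ih =>
    have hl : ∀ c ∈ l, (1:ℤ) ≤ c := fun c hc => hM c (List.mem_cons_of_mem _ hc)
    cases l with
    | nil =>
      have h2 : (0:ℝ) < t⁻¹ := inv_pos.2 (by linarith)
      have hodd : ¬ Even [b].length := by simp [Nat.even_add_one]
      rw [if_neg hodd, cfEval_singleton, cfT_cons, cfT_nil]
      linarith
    | cons c m =>
      have h1t : 1 < cfT (c :: m) t := cfT_gt_one hl ht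
      have h1e : 1 ≤ cfEval (c :: m) := cfEval_ge_one hl (by simp)
      have ihl := ih hl (by simp)
      by_cases h : Even (c :: m).length
      · have hlt : cfT (c :: m) t < cfEval (c :: m) := by rwa [if_pos h] at ihl
        have hinv : (cfEval (c :: m))⁻¹ < (cfT (c :: m) t)⁻¹ := by
          apply inv_strictAnti₀ <;> linarith
        have hodd : ¬ Even (b :: c :: m).length := by
          rw [List.length_cons, Nat.even_add_one]; exact not_not_intro h
        rw [if_neg hodd, cfEval_cons _ _ (by simp), cfT_cons]; linarith
      · have hlt : cfEval (c :: m) < cfT (c :: m) t := by rwa [if_neg h] at ihl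
        have hinv : (cfT (c :: m) t)⁻¹ < (cfEval (c :: m))⁻¹ := by
          apply inv_strictAnti₀ <;> linarith
        have heven : Even (b :: c :: m).length := by
          rw [List.length_cons, Nat.even_add_one]; exact h
        rw [if_pos heven, cfEval_cons _ _ (by simp), cfT_cons]; linarith

lemma cfEval_head_bounds (b : ℤ) (l : List ℤ) (h : ∀ c ∈ l, (1:ℤ) ≤ c)
    (hlast : ∀ c, l.getLast? = some c → 2 ≤ c) :
    (b:ℝ) ≤ cfEval (b :: l) ∧ cfEval (b :: l) < b + 1 ∧ (l ≠ [] → (b:ℝ) < cfEval (b :: l)) := by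
  cases l with
  | nil => simp
  | cons d m =>
    have h1 : 1 < cfEval (d :: m) := cfEval_gt_one h (by simp) hlast
    have h2 : (0:ℝ) < (cfEval (d :: m))⁻¹ := inv_pos.2 (by linarith)
    have h3 : (cfEval (d :: m))⁻¹ < 1 := by
      rw [inv_lt_one_iff₀]; right; exact h1
    rw [cfEval_cons _ _ (by simp)]
    refine ⟨by linarith, by linarith, fun _ => by linarith⟩

lemma cfEval_floor (b : ℤ) (l : List ℤ) (h : ∀ c ∈ l, (1:ℤ) ≤ c)
    (hlast : ∀ c, l.getLast? = some c → 2 ≤ c) : ⌊cfEval (b :: l)⌋ = b := by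
  obtain ⟨h1, h2, _⟩ := cfEval_head_bounds b l h hlast
  rw [Int.floor_eq_iff]; constructor
  · exact h1
  · push_cast; exact h2

/-- Uniqueness of continued fraction expansions whose last entry is `≥ 2`
(no condition for length-one lists). -/
lemma cfEval_inj : ∀ (M N : List ℤ), M ≠ [] → N ≠ [] →
    (∀ c ∈ M.tail, (1:ℤ) ≤ c) → (∀ c ∈ N.tail, (1:ℤ) ≤ c) →
    (∀ c, M.getLast? = some c → 2 ≤ M.length → 2 ≤ c) →
    (∀ c, N.getLast? = some c → 2 ≤ N.length → 2 ≤ c) →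
    cfEval M = cfEval N → M = N := by
  intro M
  induction M with
  | nil => intro N hM; exact absurd rfl hM
  | cons b l ih =>
    intro N _ hN htM htN hlM hlN heq
    cases N with
    | nil => exact absurd rfl hN
    | cons c m =>
      have htM' : ∀ c ∈ l, (1:ℤ) ≤ c := by simpa using htM
      have htN' : ∀ c ∈ m, (1:ℤ) ≤ c := by simpa using htN
      have hlM' : ∀ d, l.getLast? = some d → 2 ≤ d := by
        intro d hd
        cases l with
        | nil => simp at hd
        | cons e l' =>
          exact hlM d (by rw [List.getLast?_cons_cons]; exact hd) (by simp)
      have hlN' : ∀ d, m.getLast? = some d → 2 ≤ d := by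
        intro d hd
        cases m with
        | nil => simp at hd
        | cons e m' =>
          exact hlN d (by rw [List.getLast?_cons_cons]; exact hd) (by simp)
      have hbc : b = c := by
        rw [← cfEval_floor b l htM' hlM', ← cfEval_floor c m htN' hlN', heq]
      subst hbc
      cases l with
      | nil =>
        cases m with
        | nil => rfl
        | cons d m' =>
          exfalso
          have := (cfEval_head_bounds b (d :: m') htN' hlN').2.2 (by simp)
          rw [← heq] at this
          simp at this
      | cons d l' =>
        cases m with
        | nil =>
          exfalso
          have := (cfEval_head_bounds b (d :: l') htM' hlM').2.2 (by simp)
          rw [heq] at this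
          simp at this
        | cons e m' =>
          have h1 : 1 < cfEval (d :: l') := cfEval_gt_one htM' (by simp) hlM'
          have h2 : 1 < cfEval (e :: m') := cfEval_gt_one htN' (by simp) hlN'
          rw [cfEval_cons b (d :: l') (by simp), cfEval_cons b (e :: m') (by simp)] at heq
          have heq2 : cfEval (d :: l') = cfEval (e :: m') := by
            have : (cfEval (d :: l'))⁻¹ = (cfEval (e :: m'))⁻¹ := by linarith
            exact inv_injective this
          have := ih (e :: m') (by simp) (by simp)
            (fun c hc => htM' c (List.mem_of_mem_tail hc))
            (fun c hc => htN' c (List.mem_of_mem_tail hc))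
            (fun c hc _ => hlM' c hc) (fun c hc _ => hlN' c hc) heq2
          rw [this]

lemma cfIter_succ_eq (x : ℝ) (i : ℕ) : cfIter x (i + 1) = cfIter (cfStep x) i := by
  induction i with
  | zero => rfl
  | succ j ih =>
    show cfStep (cfIter x (j + 1)) = cfStep (cfIter (cfStep x) j)
    rw [ih]

lemma gauss_step {y : ℝ} {b : ℤ} (h1 : (b:ℝ) < y) (h2 : y < b + 1) :
    ⌊y⌋ = b ∧ Int.fract y ≠ 0 ∧ cfStep y = (y - b)⁻¹ := by
  have hfl : ⌊y⌋ = b := by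
    rw [Int.floor_eq_iff]; exact ⟨le_of_lt h1, by push_cast; exact h2⟩
  have hfr : Int.fract y = y - b := by rw [Int.fract, hfl]
  have hne : Int.fract y ≠ 0 := by rw [hfr]; intro h; linarith [sub_eq_zero.1 h]
  exact ⟨hfl, hne, by rw [cfStep, if_neg hne, hfr]⟩

lemma cfIter_eq_zero {y : ℝ} {j : ℕ} (h : Int.fract (cfIter y j) = 0) :
    ∀ i, j < i → cfIter y i = 0 := by
  have key : ∀ m, cfIter y (j + 1 + m) = 0 := by
    intro m
    induction m with
    | zero => show cfStep (cfIter y j) = 0; rw [cfStep, if_pos h]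
    | succ p ih =>
      show cfStep (cfIter y (j + 1 + p)) = 0
      rw [ih, cfStep, if_pos (by simp)]
  intro i hi
  have : i = j + 1 + (i - j - 1) := by omega
  rw [this]; exact key _

lemma cf_decomp {y : ℝ} {k : ℕ} (h : ∀ i < k, Int.fract (cfIter y i) ≠ 0) :
    y = cfT ((List.range k).map (pquot y)) (cfIter y k) ∧
      ∀ i, 1 ≤ i → i ≤ k → 1 < cfIter y i := by
  induction k with
  | zero => exact ⟨rfl, by omega⟩
  | succ p ih =>
    obtain ⟨hy, hgt⟩ := ih (fun i hi => h i (by omega))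
    have hfr := h p (by omega)
    have hfr0 : 0 < Int.fract (cfIter y p) := lt_of_le_of_ne (Int.fract_nonneg _) (Ne.symm hfr)
    have hfr1 : Int.fract (cfIter y p) < 1 := Int.fract_lt_one _
    have hstep : cfIter y (p + 1) = (Int.fract (cfIter y p))⁻¹ := by
      show cfStep (cfIter y p) = _; rw [cfStep, if_neg hfr]
    have hgt1 : 1 < cfIter y (p + 1) := by
      rw [hstep]; exact (one_lt_inv_iff₀).2 ⟨hfr0, hfr1⟩
    have hdec : cfIter y p = cfT [pquot y p] (cfIter y (p + 1)) := by
      rw [cfT_cons, cfT_nil, hstep, inv_inv, pquot]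
      have := Int.floor_add_fract (cfIter y p)
      linarith
    constructor
    · rw [List.range_succ, List.map_append, cfT_append]
      rw [List.map_singleton]
      rw [← hdec]; exact hy
    · intro i hi1 hi2
      rcases Nat.lt_or_ge i (p + 1) with h' | h'
      · exact hgt i hi1 (by omega)
      · have : i = p + 1 := by omega
        rw [this]; exact hgt1

/-- Key cylinder lemma: if `y` lies strictly between `cfEval M` (exclusive) and `cfT M a`
(inclusive), with orientation given by the parity of `M.length`, then the canonical
expansion of `y` starts with `M` followed by a partial quotient `≥ a`. -/
lemma cylinder_mem {a : ℕ} (ha : 2 ≤ a) :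
    ∀ (M : List ℤ), M ≠ [] → (∀ c ∈ M.tail, (1:ℤ) ≤ c) → ∀ (y : ℝ),
    (if Even M.length then cfT M (a:ℝ) ≤ y ∧ y < cfEval M
      else cfEval M < y ∧ y ≤ cfT M (a:ℝ)) →
    (∀ i, i < M.length → pquot y i = M.getD i 0) ∧
    (∀ i, i < M.length → Int.fract (cfIter y i) ≠ 0) ∧
    (a:ℤ) ≤ pquot y M.length := by
  have ha1 : (1:ℝ) < (a:ℝ) := by exact_mod_cast Nat.lt_of_lt_of_le Nat.one_lt_two ha
  intro M
  induction M with
  | nil => intro h; exact absurd rfl h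
  | cons b l ih =>
    intro _ hM y hy
    cases l with
    | nil =>
      have hodd : ¬ Even [b].length := by simp [Nat.even_add_one]
      rw [if_neg hodd] at hy
      simp only [cfEval_singleton, cfT_cons, cfT_nil] at hy
      obtain ⟨hy1, hy2⟩ := hy
      have hainv : (a:ℝ)⁻¹ < 1 := inv_lt_one_of_one_lt₀ ha1
      have hlt1 : y < (b:ℝ) + 1 := by linarith
      obtain ⟨hfl, hfr, hstep⟩ := gauss_step hy1 hlt1
      have hq0 : pquot y 0 = b := hfl
      have hiter1 : cfIter y 1 = (y - b)⁻¹ := hstep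
      have hge : (a:ℝ) ≤ (y - b)⁻¹ := by
        have h1 : 0 < y - (b:ℝ) := by linarith
        have h2 : y - (b:ℝ) ≤ (a:ℝ)⁻¹ := by linarith
        have := inv_anti₀ h1 h2
        rwa [inv_inv] at this
      refine ⟨?_, ?_, ?_⟩
      · intro i hi
        have : i = 0 := by simpa using hi
        subst this; simpa using hq0
      · intro i hi
        have : i = 0 := by simpa using hi
        subst this; exact hfr
      · show (a:ℤ) ≤ ⌊cfIter y 1⌋
        rw [hiter1, Int.le_floor]
        exact_mod_cast hge
    | cons d l' =>
      set L : List ℤ := d :: l' with hL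
      have hMl : ∀ c ∈ L, (1:ℤ) ≤ c := by simpa using hM
      have heL : 1 ≤ cfEval L := cfEval_ge_one hMl (by simp [hL])
      have hgL : 1 < cfT L (a:ℝ) := cfT_gt_one hMl ha1
      have heLpos : (0:ℝ) < cfEval L := by linarith
      have hgLpos : (0:ℝ) < cfT L (a:ℝ) := by linarith
      have heinv : (cfEval L)⁻¹ ≤ 1 := by
        rw [inv_le_one_iff₀]; right; exact heL
      have heinvpos : (0:ℝ) < (cfEval L)⁻¹ := inv_pos.2 heLpos
      have hginv : (cfT L (a:ℝ))⁻¹ < 1 := inv_lt_one_of_one_lt₀ hgL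
      have hginvpos : (0:ℝ) < (cfT L (a:ℝ))⁻¹ := inv_pos.2 hgLpos
      have hEvcons : Even (b :: L).length ↔ ¬ Even L.length := by
        rw [List.length_cons, Nat.even_add_one]
      -- establish b < y < b+1 and the transformed condition for y₁
      have key : (b:ℝ) < y ∧ y < (b:ℝ) + 1 ∧
          (if Even L.length then cfT L (a:ℝ) ≤ (y - b)⁻¹ ∧ (y - b)⁻¹ < cfEval L
            else cfEval L < (y - b)⁻¹ ∧ (y - b)⁻¹ ≤ cfT L (a:ℝ)) := by
        by_cases h : Even L.length
        · -- M odd : cfEval M < y ≤ cfT M a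
          have hcond : cfEval (b :: L) < y ∧ y ≤ cfT (b :: L) (a:ℝ) := by
            rw [if_neg (by rw [hEvcons]; exact not_not_intro h)] at hy; exact hy
          rw [cfEval_cons _ _ (by simp [hL]), cfT_cons] at hcond
          obtain ⟨hc1, hc2⟩ := hcond
          have hby : (b:ℝ) < y := by linarith
          have hyb1 : y < (b:ℝ) + 1 := by linarith
          have h1 : (cfEval L)⁻¹ < y - b := by linarith
          have h2 : y - (b:ℝ) ≤ (cfT L (a:ℝ))⁻¹ := by linarith
          have hub : (y - (b:ℝ))⁻¹ < cfEval L := by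
            have := inv_strictAnti₀ heinvpos h1
            rwa [inv_inv] at this
          have hlb : cfT L (a:ℝ) ≤ (y - (b:ℝ))⁻¹ := by
            have := inv_anti₀ (by linarith : (0:ℝ) < y - b) h2
            rwa [inv_inv] at this
          exact ⟨hby, hyb1, by rw [if_pos h]; exact ⟨hlb, hub⟩⟩
        · -- M even : cfT M a ≤ y < cfEval M
          have hcond : cfT (b :: L) (a:ℝ) ≤ y ∧ y < cfEval (b :: L) := by
            rw [if_pos (by rw [hEvcons]; exact h)] at hy; exact hy
          rw [cfEval_cons _ _ (by simp [hL]), cfT_cons] at hcond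
          obtain ⟨hc1, hc2⟩ := hcond
          have hby : (b:ℝ) < y := by linarith
          have hyb1 : y < (b:ℝ) + 1 := by linarith
          have h1 : (cfT L (a:ℝ))⁻¹ ≤ y - b := by linarith
          have h2 : y - (b:ℝ) < (cfEval L)⁻¹ := by linarith
          have hub : cfEval L < (y - (b:ℝ))⁻¹ := by
            have := inv_strictAnti₀ (by linarith : (0:ℝ) < y - b) h2
            rwa [inv_inv] at this
          have hlb : (y - (b:ℝ))⁻¹ ≤ cfT L (a:ℝ) := by
            have := inv_anti₀ hginvpos h1
            rwa [inv_inv] at this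
          exact ⟨hby, hyb1, by rw [if_neg h]; exact ⟨hub, hlb⟩⟩
      obtain ⟨hby, hyb1, hcond'⟩ := key
      obtain ⟨hfl, hfr, hstep⟩ := gauss_step hby hyb1
      obtain ⟨ih1, ih2, ih3⟩ := ih (by simp [hL])
        (fun c hc => hMl c (List.mem_of_mem_tail hc)) ((y - b)⁻¹) hcond'
      have hshift : ∀ j, cfIter y (j + 1) = cfIter ((y - b)⁻¹) j := by
        intro j; rw [cfIter_succ_eq, hstep]
      refine ⟨?_, ?_, ?_⟩
      · intro i hi
        cases i with
        | zero => show ⌊y⌋ = (b :: L).getD 0 0; simpa using hfl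
        | succ j =>
          have hj : j < L.length := by simpa using hi
          show ⌊cfIter y (j + 1)⌋ = (b :: L).getD (j + 1) 0
          rw [hshift j]
          simpa [pquot] using ih1 j hj
      · intro i hi
        cases i with
        | zero => exact hfr
        | succ j =>
          have hj : j < L.length := by simpa using hi
          rw [hshift j]
          exact ih2 j hj
      · show (a:ℤ) ≤ ⌊cfIter y (L.length + 1)⌋
        rw [hshift L.length]
        exact ih3

lemma cfT_head_bounds {M : List ℤ} (hne : M ≠ []) (hM : ∀ c ∈ M.tail, (1:ℤ) ≤ c)
    {t : ℝ} (ht : 1 < t) :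
    ((M.getD 0 0 : ℤ) : ℝ) < cfT M t ∧ cfT M t < (M.getD 0 0 : ℤ) + 1 := by
  cases M with
  | nil => exact absurd rfl hne
  | cons b l =>
    have hM' : ∀ c ∈ l, (1:ℤ) ≤ c := by simpa using hM
    simp only [List.getD_cons_zero, cfT_cons]
    cases l with
    | nil =>
      have h1 : (0:ℝ) < t⁻¹ := inv_pos.2 (by linarith)
      have h2 : t⁻¹ < 1 := inv_lt_one_of_one_lt₀ ht
      constructor <;> · simp only [cfT_nil]; linarith
    | cons d m =>
      have h1 : 1 < cfT (d :: m) t := cfT_gt_one hM' ht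
      have h2 : (0:ℝ) < (cfT (d :: m) t)⁻¹ := inv_pos.2 (by linarith)
      have h3 : (cfT (d :: m) t)⁻¹ < 1 := inv_lt_one_of_one_lt₀ h1
      constructor <;> linarith

lemma cfT_vs_cfEval' {M : List ℤ} (hne : M ≠ []) (hM : ∀ c ∈ M.tail, (1:ℤ) ≤ c)
    {t : ℝ} (ht : 1 < t) :
    if Even M.length then cfT M t < cfEval M else cfEval M < cfT M t := by
  cases M with
  | nil => exact absurd rfl hne
  | cons b l =>
    have hM' : ∀ c ∈ l, (1:ℤ) ≤ c := by simpa using hM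
    cases l with
    | nil =>
      have h1 : (0:ℝ) < t⁻¹ := inv_pos.2 (by linarith)
      rw [if_neg (by simp [Nat.even_add_one]), cfEval_singleton, cfT_cons, cfT_nil]
      linarith
    | cons d m =>
      have h1t : 1 < cfT (d :: m) t := cfT_gt_one hM' ht
      have h1e : 1 ≤ cfEval (d :: m) := cfEval_ge_one hM' (by simp)
      have ihl := cfT_vs_cfEval (M := d :: m) hM' (by simp) ht
      by_cases h : Even (d :: m).length
      · have hlt : cfT (d :: m) t < cfEval (d :: m) := by rwa [if_pos h] at ihl
        have hinv : (cfEval (d :: m))⁻¹ < (cfT (d :: m) t)⁻¹ := by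
          apply inv_strictAnti₀ <;> linarith
        have hodd : ¬ Even (b :: d :: m).length := by
          rw [List.length_cons, Nat.even_add_one]; exact not_not_intro h
        rw [if_neg hodd, cfEval_cons _ _ (by simp), cfT_cons]; linarith
      · have hlt : cfEval (d :: m) < cfT (d :: m) t := by rwa [if_neg h] at ihl
        have hinv : (cfT (d :: m) t)⁻¹ < (cfEval (d :: m))⁻¹ := by
          apply inv_strictAnti₀ <;> linarith
        have heven : Even (b :: d :: m).length := by
          rw [List.length_cons, Nat.even_add_one]; exact h
        rw [if_pos heven, cfEval_cons _ _ (by simp), cfT_cons]; linarith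

lemma cfT_mono' {M : List ℤ} (hne : M ≠ []) (hM : ∀ c ∈ M.tail, (1:ℤ) ≤ c)
    {s t : ℝ} (hs : 1 < s) (hst : s ≤ t) :
    if Even M.length then cfT M s ≤ cfT M t else cfT M t ≤ cfT M s := by
  rcases eq_or_lt_of_le hst with heq | hlt
  · subst heq; split <;> exact le_refl _
  cases M with
  | nil => exact absurd rfl hne
  | cons b l =>
    have hM' : ∀ c ∈ l, (1:ℤ) ≤ c := by simpa using hM
    cases l with
    | nil =>
      have : t⁻¹ ≤ s⁻¹ := by
        apply inv_anti₀ (by linarith) (by linarith)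
      rw [if_neg (by simp [Nat.even_add_one]), cfT_cons, cfT_cons, cfT_nil, cfT_nil]
      linarith
    | cons d m =>
      have h1s : 1 < cfT (d :: m) s := cfT_gt_one hM' hs
      have h1t : 1 < cfT (d :: m) t := cfT_gt_one hM' (by linarith)
      have ihl := cfT_strictMono hM' hs hlt
      by_cases h : Even (d :: m).length
      · have hlt2 : cfT (d :: m) s < cfT (d :: m) t := by rwa [if_pos h] at ihl
        have hinv : (cfT (d :: m) t)⁻¹ < (cfT (d :: m) s)⁻¹ := by
          apply inv_strictAnti₀ <;> linarith
        have hodd : ¬ Even (b :: d :: m).length := by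
          rw [List.length_cons, Nat.even_add_one]; exact not_not_intro h
        rw [if_neg hodd, cfT_cons b (d :: m) t, cfT_cons b (d :: m) s]; linarith
      · have hlt2 : cfT (d :: m) t < cfT (d :: m) s := by rwa [if_neg h] at ihl
        have hinv : (cfT (d :: m) s)⁻¹ < (cfT (d :: m) t)⁻¹ := by
          apply inv_strictAnti₀ <;> linarith
        have heven : Even (b :: d :: m).length := by
          rw [List.length_cons, Nat.even_add_one]; exact h
        rw [if_pos heven, cfT_cons b (d :: m) s, cfT_cons b (d :: m) t]; linarith

lemma map_range_getLast? (f : ℕ → ℤ) (k : ℕ) (hk : 1 ≤ k) :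
    ((List.range k).map f).getLast? = some (f (k - 1)) := by
  obtain ⟨m, rfl⟩ : ∃ m, k = m + 1 := ⟨k - 1, by omega⟩
  rw [List.range_succ, List.map_append, List.map_singleton, List.getLast?_concat]
  simp

/-- The locking zone of a rational `p/q = [a₀; a₁, …, aₙ]` with all
partial quotients `≤ a - 1` is the closed interval with endpoints
`[a₀; a₁, …, aₙ, a]` and `[a₀; a₁, …, aₙ - 1, 1, a]`, the former being the right
endpoint exactly when `n` is even; and `r_a` equals `p/q` on this interval. -/
theorem stmt_2 (a : ℕ) (ha : 2 ≤ a) (x : ℚ) (hx0 : 0 < (x : ℝ)) (hxa : (x : ℝ) < a)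
    (n : ℕ) (A : ℕ → ℤ) (hA : IsCanonCF (x : ℝ) A n)
    (hbd : ∀ i ≤ n, A i ≤ (a : ℤ) - 1) :
    (lockZone a (x : ℝ) =
      if Even n then
        Set.Icc (cfEval ((List.range n).map A ++ [A n - 1, 1, (a : ℤ)]))
          (cfEval ((List.range (n + 1)).map A ++ [(a : ℤ)]))
      else
        Set.Icc (cfEval ((List.range (n + 1)).map A ++ [(a : ℤ)]))
          (cfEval ((List.range n).map A ++ [A n - 1, 1, (a : ℤ)]))) ∧
    ∀ y ∈ Set.uIcc (cfEval ((List.range (n + 1)).map A ++ [(a : ℤ)]))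
        (cfEval ((List.range n).map A ++ [A n - 1, 1, (a : ℤ)])),
      ra a y = (x : ℝ) := by

  classical
  obtain ⟨hpq, hend, hfrk⟩ := hA
  set v : ℝ := (x : ℝ) with hv
  set L : List ℤ := (List.range (n+1)).map A with hLdef
  set L' : List ℤ := (List.range n).map A ++ [A n - 1, 1] with hL'def
  have ha1 : (1:ℝ) < (a:ℝ) := by exact_mod_cast (by omega : 1 < a)
  have haZ : (2:ℤ) ≤ (a:ℤ) := by exact_mod_cast ha
  -- decomposition of v
  obtain ⟨hdec, hgt⟩ := cf_decomp (y := v) (k := n) hfrk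
  have hItn : cfIter v n = ((A n : ℤ) : ℝ) := by
    have h1 := Int.floor_add_fract (cfIter v n)
    rw [hend, add_zero] at h1
    rw [← h1]
    exact_mod_cast congrArg (fun z : ℤ => (z : ℝ)) (hpq n le_rfl)
  have hA1 : ∀ i, 1 ≤ i → i ≤ n → 1 ≤ A i := by
    intro i h1 h2
    rw [← hpq i h2]
    exact Int.le_floor.mpr (by exact_mod_cast le_of_lt (hgt i h1 h2))
  have hAn2 : 1 ≤ n → 2 ≤ A n := by
    intro h
    have h2 := hgt n h le_rfl
    rw [hItn] at h2
    have : (1:ℤ) < A n := by exact_mod_cast h2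
    omega
  have hA0 : 0 ≤ A 0 := by
    rw [← hpq 0 (Nat.zero_le n)]
    exact Int.le_floor.mpr (by rw [show cfIter v 0 = v from rfl]; simpa using le_of_lt hx0)
  have hA0a : A 0 ≤ (a:ℤ) - 1 := hbd 0 (Nat.zero_le n)
  have hn0 : n = 0 → 1 ≤ A 0 := by
    intro h
    subst h
    have : v = ((A 0 : ℤ) : ℝ) := hItn
    have : (0:ℝ) < ((A 0 : ℤ) : ℝ) := by rw [← this]; exact hx0
    have : (0:ℤ) < A 0 := by exact_mod_cast this
    omega
  have hLsplit : L = (List.range n).map A ++ [A n] := by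
    rw [hLdef, List.range_succ, List.map_append, List.map_singleton]
  have hvL : cfEval L = v := by
    rw [hLsplit, cfEval_append_singleton, ← hItn]
    have h2 : (List.range n).map A = (List.range n).map (pquot v) := by
      apply List.map_congr_left
      intro i hi
      exact (hpq i (le_of_lt (List.mem_range.mp hi))).symm
    rw [h2]
    exact hdec.symm
  have hvL' : cfEval L' = v := by
    rw [hL'def, cfEval_one_trick, (by omega : A n - 1 + 1 = A n), ← hLsplit, hvL]
  have hLlen : L.length = n + 1 := by simp [hLdef]
  have hL'len : L'.length = n + 2 := by simp [hL'def]
  have hLne : L ≠ [] := by rw [← List.length_pos_iff_ne_nil, hLlen]; omega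
  have hL'ne : L' ≠ [] := by rw [← List.length_pos_iff_ne_nil, hL'len]; omega
  have htL : ∀ c ∈ L.tail, (1:ℤ) ≤ c := by
    rw [hLdef, List.range_succ_eq_map, List.map_cons, List.tail_cons, List.map_map]
    intro c hc
    obtain ⟨i, hi, rfl⟩ := List.mem_map.mp hc
    exact hA1 (i+1) (by omega) (by exact List.mem_range.mp hi)
  have htL' : ∀ c ∈ L'.tail, (1:ℤ) ≤ c := by
    cases n with
    | zero =>
      intro c hc
      simp only [hL'def, List.range_zero, List.map_nil, List.nil_append, List.tail_cons] at hc
      simp only [List.mem_singleton] at hc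
      omega
    | succ m =>
      intro c hc
      rw [hL'def, List.range_succ_eq_map, List.map_cons, List.map_map, List.cons_append,
        List.tail_cons] at hc
      rcases List.mem_append.mp hc with h | h
      · obtain ⟨i, hi, rfl⟩ := List.mem_map.mp h
        exact hA1 (i+1) (by omega) (by have := List.mem_range.mp hi; omega)
      · have h2 : 2 ≤ A (m+1) := hAn2 (by omega)
        rcases List.mem_cons.mp h with h' | h'
        · omega
        · simp only [List.mem_singleton] at h'
          omega
  have hbL : ∀ c ∈ L, c ≤ (a:ℤ) - 1 := by
    intro c hc
    rw [hLdef] at hc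
    obtain ⟨i, hi, rfl⟩ := List.mem_map.mp hc
    exact hbd i (by have := List.mem_range.mp hi; omega)
  have hbL' : ∀ c ∈ L', c ≤ (a:ℤ) - 1 := by
    intro c hc
    rw [hL'def] at hc
    rcases List.mem_append.mp hc with h | h
    · obtain ⟨i, hi, rfl⟩ := List.mem_map.mp h
      exact hbd i (by have := List.mem_range.mp hi; omega)
    · have h2 := hbd n le_rfl
      rcases List.mem_cons.mp h with h' | h'
      · omega
      · simp only [List.mem_singleton] at h'
        omega
  have hlastL : ∀ c, L.getLast? = some c → 2 ≤ L.length → 2 ≤ c := by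
    intro c hc hlen
    rw [hLsplit, List.getLast?_concat] at hc
    have : c = A n := by injection hc; omega
    subst this
    exact hAn2 (by omega)
  -- endpoints
  set ν₁ : ℝ := cfT L (a:ℝ) with hν₁def
  set ν₂ : ℝ := cfT L' (a:ℝ) with hν₂def
  have hcast : (((a:ℕ):ℤ):ℝ) = (a:ℝ) := by push_cast; ring
  have heq₁ : cfEval (L ++ [((a:ℕ):ℤ)]) = ν₁ := by
    rw [cfEval_append_singleton, hcast]
  have heq₂ : cfEval ((List.range n).map A ++ [A n - 1, 1, ((a:ℕ):ℤ)]) = ν₂ := by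
    have hl : (List.range n).map A ++ [A n - 1, 1, ((a:ℕ):ℤ)] = L' ++ [((a:ℕ):ℤ)] := by
      rw [hL'def, List.append_assoc]
      rfl
    rw [hl, cfEval_append_singleton, hcast]
  -- parity
  have hEvL : Even L.length ↔ ¬ Even n := by rw [hLlen]; exact Nat.even_add_one
  have hEvL' : Even L'.length ↔ Even n := by
    rw [hL'len]
    constructor
    · intro h; rcases h with ⟨r, hr⟩; exact ⟨r - 1, by omega⟩
    · intro h; rcases h with ⟨r, hr⟩; exact ⟨r + 1, by omega⟩
  -- orientation
  have hordL : (Even n → v < ν₁) ∧ (¬ Even n → ν₁ < v) := by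
    have h := cfT_vs_cfEval' hLne htL ha1
    constructor
    · intro hn
      rw [if_neg (by rw [hEvL]; exact not_not_intro hn), hvL] at h
      exact h
    · intro hn
      rw [if_pos (hEvL.mpr hn), hvL] at h
      exact h
  have hordL' : (Even n → ν₂ < v) ∧ (¬ Even n → v < ν₂) := by
    have h := cfT_vs_cfEval' hL'ne htL' ha1
    constructor
    · intro hn
      rw [if_pos (hEvL'.mpr hn), hvL'] at h
      exact h
    · intro hn
      rw [if_neg (fun hc => hn (hEvL'.mp hc)), hvL'] at h
      exact h
  -- head bounds
  have hL0 : L.getD 0 0 = A 0 := by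
    rw [hLdef, List.getD_eq_getElem _ 0 (by simp)]
    simp
  have hL'0 : 0 ≤ L'.getD 0 0 ∧ L'.getD 0 0 + 1 ≤ (a:ℤ) := by
    cases n with
    | zero =>
      have h1 := hn0 rfl
      simp only [hL'def, List.range_zero, List.map_nil, List.nil_append, List.getD_cons_zero]
      omega
    | succ m =>
      rw [hL'def, List.range_succ_eq_map, List.map_cons, List.cons_append, List.getD_cons_zero]
      omega
  have hb₁ : 0 ≤ ν₁ ∧ ν₁ < (a:ℝ) := by
    obtain ⟨h1, h2⟩ := cfT_head_bounds hLne htL ha1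
    rw [hL0] at h1 h2
    have c1 : (0:ℝ) ≤ ((A 0 : ℤ):ℝ) := by exact_mod_cast hA0
    have c2 : ((A 0 : ℤ):ℝ) + 1 ≤ (a:ℝ) := by exact_mod_cast (by omega : A 0 + 1 ≤ (a:ℤ))
    exact ⟨by linarith, by linarith⟩
  have hb₂ : 0 ≤ ν₂ ∧ ν₂ < (a:ℝ) := by
    obtain ⟨h1, h2⟩ := cfT_head_bounds hL'ne htL' ha1
    have c1 : (0:ℝ) ≤ ((L'.getD 0 0 : ℤ):ℝ) := by exact_mod_cast hL'0.1
    have c2 : ((L'.getD 0 0 : ℤ):ℝ) + 1 ≤ (a:ℝ) := by exact_mod_cast hL'0.2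
    exact ⟨by linarith, by linarith⟩
  -- r_a fixes v
  have hrv : ra a v = v := by
    rw [ra, dif_neg]
    rintro ⟨i, hi1, hia⟩
    rcases le_or_gt i n with h | h
    · rw [hpq i h] at hia
      have := hbd i h
      omega
    · have h0 : cfIter v i = 0 := cfIter_eq_zero hend i h
      rw [pquot, h0] at hia
      simp at hia
      omega
  -- r_a on cylinders
  have raOn : ∀ (M : List ℤ), M ≠ [] → (∀ c ∈ M.tail, (1:ℤ) ≤ c) →
      (∀ c ∈ M, c ≤ (a:ℤ) - 1) → cfEval M = v →
      ∀ y : ℝ, (if Even M.length then cfT M (a:ℝ) ≤ y ∧ y < cfEval M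
        else cfEval M < y ∧ y ≤ cfT M (a:ℝ)) → ra a y = v := by
    intro M hne hMt hMb hMe y hy
    obtain ⟨h1, h2, h3⟩ := cylinder_mem ha M hne hMt y hy
    have hlen1 : 1 ≤ M.length := List.length_pos_iff_ne_nil.mpr hne
    have hex : ∃ i, 1 ≤ i ∧ (a:ℤ) ≤ pquot y i := ⟨M.length, hlen1, h3⟩
    rw [ra, dif_pos hex]
    have hfind : Nat.find hex = M.length := by
      rw [Nat.find_eq_iff]
      refine ⟨⟨hlen1, h3⟩, ?_⟩
      rintro j hj ⟨hj1, hja⟩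
      have e1 := h1 j hj
      have hmem : M.getD j 0 ∈ M := by
        rw [List.getD_eq_getElem M 0 hj]
        exact List.getElem_mem _
      have e2 := hMb _ hmem
      omega
    rw [hfind]
    have hlist : (List.range M.length).map (pquot y) = M := by
      apply List.ext_getElem (by simp)
      intro i hi1 hi2
      simp only [List.getElem_map, List.getElem_range]
      rw [← List.getD_eq_getElem M 0 hi2]
      exact h1 i hi2
    rw [hlist, hMe]
  -- forward: points of the closed interval are locked
  have main2 : ∀ y : ℝ, (if Even n then ν₂ ≤ y ∧ y ≤ ν₁ else ν₁ ≤ y ∧ y ≤ ν₂) →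
      ra a y = v := by
    intro y hy
    by_cases hn : Even n
    · rw [if_pos hn] at hy
      have h1 : ν₂ < v := hordL'.1 hn
      have h2 : v < ν₁ := hordL.1 hn
      rcases lt_trichotomy y v with h | h | h
      · exact raOn L' hL'ne htL' hbL' hvL' y
          (by rw [if_pos (hEvL'.mpr hn)]; exact ⟨hy.1, by rw [hvL']; exact h⟩)
      · rw [h]; exact hrv
      · exact raOn L hLne htL hbL hvL y
          (by rw [if_neg (by rw [hEvL]; exact not_not_intro hn)]
              exact ⟨by rw [hvL]; exact h, hy.2⟩)
    · rw [if_neg hn] at hy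
      have h1 : ν₁ < v := hordL.2 hn
      have h2 : v < ν₂ := hordL'.2 hn
      rcases lt_trichotomy y v with h | h | h
      · exact raOn L hLne htL hbL hvL y
          (by rw [if_pos (hEvL.mpr hn)]; exact ⟨hy.1, by rw [hvL]; exact h⟩)
      · rw [h]; exact hrv
      · exact raOn L' hL'ne htL' hbL' hvL' y
          (by rw [if_neg (fun hc => hn (hEvL'.mp hc))]
              exact ⟨by rw [hvL']; exact h, hy.2⟩)
  -- converse: locked points lie in the closed interval
  have conv : ∀ y : ℝ, ra a y = v →
      (if Even n then ν₂ ≤ y ∧ y ≤ ν₁ else ν₁ ≤ y ∧ y ≤ ν₂) := by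
    intro y hray
    by_cases hex : ∃ i, 1 ≤ i ∧ (a:ℤ) ≤ pquot y i
    · rw [ra, dif_pos hex] at hray
      have hspec := Nat.find_spec hex
      have hmin : ∀ j, j < Nat.find hex → ¬(1 ≤ j ∧ (a:ℤ) ≤ pquot y j) :=
        fun j hj => Nat.find_min hex hj
      obtain ⟨k, hkdef⟩ : ∃ k, k = Nat.find hex := ⟨_, rfl⟩
      rw [← hkdef] at hray hspec hmin
      obtain ⟨hk1, hka⟩ := hspec
      have hfr : ∀ i, i < k → Int.fract (cfIter y i) ≠ 0 := by
        intro i hik hcon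
        have h0 : cfIter y k = 0 := cfIter_eq_zero hcon k hik
        rw [pquot, h0] at hka
        simp only [Int.floor_zero] at hka
        omega
      obtain ⟨hyd, hygt⟩ := cf_decomp (y := y) (k := k) hfr
      have ht1 : 1 < cfIter y k := hygt k hk1 le_rfl
      have hta : (a:ℝ) ≤ cfIter y k := by
        have h1 : ((((a:ℕ):ℤ)):ℝ) ≤ ((⌊cfIter y k⌋ : ℤ) : ℝ) := by exact_mod_cast hka
        rw [hcast] at h1
        linarith [Int.floor_le (cfIter y k)]
      obtain ⟨P, hPdef⟩ : ∃ P, P = (List.range k).map (pquot y) := ⟨_, rfl⟩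
      have hPlen : P.length = k := by simp [hPdef]
      have hPne : P ≠ [] := by rw [← List.length_pos_iff_ne_nil, hPlen]; omega
      have hPe : cfEval P = v := by rw [hPdef]; exact hray
      have hyd' : y = cfT P (cfIter y k) := by rw [hPdef]; exact hyd
      have hq1 : ∀ i, 1 ≤ i → i ≤ k → 1 ≤ pquot y i := by
        intro i hi1 hi2
        exact Int.le_floor.mpr (by exact_mod_cast le_of_lt (hygt i hi1 hi2))
      have hPtail : ∀ c ∈ P.tail, (1:ℤ) ≤ c := by
        intro c hc
        rw [hPdef] at hc
        cases k with
        | zero => simp at hc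
        | succ m =>
          rw [List.range_succ_eq_map, List.map_cons, List.tail_cons, List.map_map] at hc
          obtain ⟨i, hi, rfl⟩ := List.mem_map.mp hc
          exact hq1 (i+1) (by omega) (by have := List.mem_range.mp hi; omega)
      have hPlast? : P.getLast? = some (pquot y (k-1)) := by
        rw [hPdef]; exact map_range_getLast? _ _ hk1
      by_cases hone : 2 ≤ k ∧ pquot y (k-1) = 1
      · -- non-canonical ending: P = L'
        obtain ⟨hk2, hc1⟩ := hone
        obtain ⟨m, hm⟩ : ∃ m, k = m + 2 := ⟨k - 2, by omega⟩
        have hPsplit : P = (List.range m).map (pquot y) ++ [pquot y m, 1] := by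
          have hc1' : pquot y (m+1) = 1 := by rw [← hc1]; congr 1; omega
          rw [hPdef, hm, List.range_succ, List.range_succ, List.map_append, List.map_append,
            List.map_singleton, List.map_singleton, List.append_assoc]
          congr 1
          simp [hc1']
        have hQe : cfEval ((List.range m).map (pquot y) ++ [pquot y m + 1]) = v := by
          rw [← cfEval_one_trick, ← hPsplit]; exact hPe
        have hQtail : ∀ c ∈ ((List.range m).map (pquot y) ++ [pquot y m + 1]).tail,
            (1:ℤ) ≤ c := by
          intro c hc
          cases m with
          | zero => simp at hc
          | succ m' =>
            rw [List.range_succ_eq_map, List.map_cons, List.map_map, List.cons_append,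
              List.tail_cons] at hc
            rcases List.mem_append.mp hc with h | h
            · obtain ⟨i, hi, rfl⟩ := List.mem_map.mp h
              exact hq1 (i+1) (by omega) (by have := List.mem_range.mp hi; omega)
            · simp only [List.mem_singleton] at h
              have h2 : 1 ≤ pquot y (m'+1) := hq1 (m'+1) (by omega) (by omega)
              omega
        have hQlast : ∀ c', ((List.range m).map (pquot y) ++ [pquot y m + 1]).getLast? = some c' →
            2 ≤ ((List.range m).map (pquot y) ++ [pquot y m + 1]).length → 2 ≤ c' := by
          intro c' hc' hlen
          rw [List.getLast?_concat] at hc'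
          have hcc : pquot y m + 1 = c' := by injection hc'
          simp only [List.length_append, List.length_map, List.length_range,
            List.length_singleton] at hlen
          have h2 : 1 ≤ pquot y m := hq1 m (by omega) (by omega)
          omega
        have hQL : (List.range m).map (pquot y) ++ [pquot y m + 1] = L :=
          cfEval_inj _ L (by simp) hLne hQtail htL hQlast hlastL (by rw [hQe, hvL])
        have hmn : m = n := by
          have hlen := congrArg List.length hQL
          simp only [List.length_append, List.length_map, List.length_range,
            List.length_singleton, hLlen] at hlen
          omega
        subst hmn
        obtain ⟨hmap, hsing⟩ := List.append_inj' (hQL.trans hLsplit) (by simp)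
        have hAn : pquot y m + 1 = A m := by simpa using hsing
        have hPL' : P = L' := by
          have hpm : pquot y m = A m - 1 := by omega
          rw [hPsplit, hmap, hpm, hL'def]
        have hy_eq : y = cfT L' (cfIter y k) := by rw [← hPL']; exact hyd'
        have hmono := cfT_mono' hL'ne htL' ha1 hta
        have hcmp := cfT_vs_cfEval' hL'ne htL' ht1
        rw [← hν₂def, ← hy_eq] at hmono
        rw [hvL', ← hy_eq] at hcmp
        by_cases hn : Even m
        · rw [if_pos hn]
          rw [if_pos (hEvL'.mpr hn)] at hmono hcmp
          have h2 : v < ν₁ := hordL.1 hn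
          exact ⟨hmono, by linarith⟩
        · rw [if_neg hn]
          rw [if_neg (fun hc => hn (hEvL'.mp hc))] at hmono hcmp
          have h2 : ν₁ < v := hordL.2 hn
          exact ⟨by linarith, hmono⟩
      · -- canonical ending: P = L
        have hPlast : ∀ c, P.getLast? = some c → 2 ≤ P.length → 2 ≤ c := by
          intro c hc hlen
          rw [hPlast?] at hc
          have hcc : pquot y (k-1) = c := by injection hc
          rw [hPlen] at hlen
          have h1c : 1 ≤ pquot y (k-1) := hq1 (k-1) (by omega) (by omega)
          have hne1 : pquot y (k-1) ≠ 1 := fun h => hone ⟨hlen, h⟩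
          omega
        have hPL : P = L := cfEval_inj P L hPne hLne hPtail htL hPlast hlastL
          (by rw [hPe, hvL])
        have hy_eq : y = cfT L (cfIter y k) := by rw [← hPL]; exact hyd'
        have hmono := cfT_mono' hLne htL ha1 hta
        have hcmp := cfT_vs_cfEval' hLne htL ht1
        rw [← hν₁def, ← hy_eq] at hmono
        rw [hvL, ← hy_eq] at hcmp
        by_cases hn : Even n
        · rw [if_pos hn]
          rw [if_neg (by rw [hEvL]; exact not_not_intro hn)] at hmono hcmp
          have h1 : ν₂ < v := hordL'.1 hn
          exact ⟨by linarith, hmono⟩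
        · rw [if_neg hn]
          rw [if_pos (hEvL.mpr hn)] at hmono hcmp
          have h2 : v < ν₂ := hordL'.2 hn
          exact ⟨hmono, by linarith⟩
    · rw [ra, dif_neg hex] at hray
      rw [hray]
      by_cases hn : Even n
      · rw [if_pos hn]
        exact ⟨le_of_lt (hordL'.1 hn), le_of_lt (hordL.1 hn)⟩
      · rw [if_neg hn]
        exact ⟨le_of_lt (hordL.2 hn), le_of_lt (hordL'.2 hn)⟩
  constructor
  · ext y
    simp only [lockZone, Set.mem_setOf_eq, Set.mem_Ico]
    constructor
    · rintro ⟨⟨hy0, hya⟩, hray⟩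
      have hc := conv y hray
      by_cases hn : Even n
      · rw [if_pos hn] at hc
        rw [if_pos hn, Set.mem_Icc, heq₁, heq₂]
        exact hc
      · rw [if_neg hn] at hc
        rw [if_neg hn, Set.mem_Icc, heq₁, heq₂]
        exact hc
    · intro hy
      by_cases hn : Even n
      · rw [if_pos hn, Set.mem_Icc, heq₁, heq₂] at hy
        refine ⟨⟨?_, ?_⟩, main2 y (by rw [if_pos hn]; exact hy)⟩
        · linarith [hb₂.1, hy.1]
        · linarith [hb₁.2, hy.2]
      · rw [if_neg hn, Set.mem_Icc, heq₁, heq₂] at hy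
        refine ⟨⟨?_, ?_⟩, main2 y (by rw [if_neg hn]; exact hy)⟩
        · linarith [hb₁.1, hy.1]
        · linarith [hb₂.2, hy.2]
  · intro y hy
    rw [heq₁, heq₂] at hy
    rcases Set.mem_uIcc.mp hy with ⟨h1, h2⟩ | ⟨h1, h2⟩
    · -- ν₁ ≤ y ≤ ν₂
      apply main2 y
      by_cases hn : Even n
      · rw [if_pos hn]
        have := hordL'.1 hn
        have := hordL.1 hn
        exact ⟨by linarith, by linarith⟩
      · rw [if_neg hn]
        exact ⟨h1, h2⟩
    · -- ν₂ ≤ y ≤ ν₁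
      apply main2 y
      by_cases hn : Even n
      · rw [if_pos hn]
        exact ⟨h1, h2⟩
      · rw [if_neg hn]
        have := hordL.2 hn
        have := hordL'.2 hn
        exact ⟨by linarith, by linarith⟩
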